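/- arXiv:math/0703854 — 7 statements merged into one kernel-verified Lean document; each statement's English description precedes it below -/
import Mathlib

section
/- For any probability distribution π on a measurable space G and any measurable function h: G → ℝ (bounded below suitably), the infimum over probability distributions ρ on G of (E_{g∼ρ} h(g) + KL(ρ, π)) equals -log E_{g∼π} exp(-h(g)), and the infimum is attained by the Gibbs distribution π_{-h} with density proportional to exp(-h(g)) with respect to π. -/
open MeasureTheory

/-- Gibbs inequality: the KL divergence of probability measures is nonnegative. -/
lemma kl_nonneg_aux {G : Type*} [MeasurableSpace G] {μ ν : Measure G}
    [IsProbabilityMeasure μ] [IsProbabilityMeasure ν] (hμν : μ ≪ ν)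
    (hint : Integrable (llr μ ν) μ) : 0 ≤ ∫ g, llr μ ν g ∂μ := by
  have hconv : ∫ g, llr μ ν g ∂μ
      = ∫ g, (μ.rnDeriv ν g).toReal • llr μ ν g ∂ν :=
    (integral_rnDeriv_smul hμν).symm
  rw [hconv]
  have hf_int : Integrable (fun g => (μ.rnDeriv ν g).toReal) ν :=
    Measure.integrable_toReal_rnDeriv
  have hfl_int : Integrable (fun g => (μ.rnDeriv ν g).toReal • llr μ ν g) ν :=
    (integrable_rnDeriv_smul_iff hμν).mpr hint
  have hle : ∀ g, (μ.rnDeriv ν g).toReal - 1 ≤ (μ.rnDeriv ν g).toReal • llr μ ν g := by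
    intro g
    set x := (μ.rnDeriv ν g).toReal with hx
    have hx0 : 0 ≤ x := ENNReal.toReal_nonneg
    rcases eq_or_lt_of_le hx0 with hx0' | hx0'
    · simp [llr, ← hx, ← hx0']
    · have h1 : Real.log (1 / x) ≤ 1 / x - 1 := Real.log_le_sub_one_of_pos (by positivity)
      rw [one_div, Real.log_inv] at h1
      have h2 : x * (-Real.log x) ≤ x * (x⁻¹ - 1) := mul_le_mul_of_nonneg_left h1 hx0
      have h3 : x * (x⁻¹ - 1) = 1 - x := by field_simp
      simp only [smul_eq_mul, llr]
      nlinarith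
  calc (0:ℝ) = ∫ g, ((μ.rnDeriv ν g).toReal - 1) ∂ν := by
        rw [integral_sub hf_int (integrable_const 1), Measure.integral_toReal_rnDeriv hμν]
        simp
    _ ≤ _ := integral_mono (hf_int.sub (integrable_const 1)) hfl_int hle

/-- Kullback-Leibler duality formula: the infimum over probability measures `ρ` of
`E_ρ h + KL(ρ, π)` equals `-log E_π exp(-h)`, attained by the Gibbs distribution. -/
theorem stmt0 {G : Type*} [MeasurableSpace G] (π : Measure G) [IsProbabilityMeasure π]
    (h : G → ℝ) (hmeas : Measurable h) (C : ℝ) (hbdd : ∀ g, |h g| ≤ C) :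
    IsLeast
      { x : ℝ | ∃ ρ : Measure G, IsProbabilityMeasure ρ ∧ ρ ≪ π ∧
          Integrable (fun g => Real.log ((ρ.rnDeriv π g).toReal)) ρ ∧
          x = (∫ g, h g ∂ρ) + ∫ g, Real.log ((ρ.rnDeriv π g).toReal) ∂ρ }
      (-(Real.log (∫ g, Real.exp (-(h g)) ∂π))) ∧
    (∫ g, h g ∂(π.withDensity fun g =>
        ENNReal.ofReal (Real.exp (-(h g)) / ∫ g', Real.exp (-(h g')) ∂π)))
      + (∫ g, Real.log (((π.withDensity fun g =>
            ENNReal.ofReal (Real.exp (-(h g)) / ∫ g', Real.exp (-(h g')) ∂π)).rnDeriv π g).toReal)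
          ∂(π.withDensity fun g =>
            ENNReal.ofReal (Real.exp (-(h g)) / ∫ g', Real.exp (-(h g')) ∂π)))
      = -(Real.log (∫ g, Real.exp (-(h g)) ∂π)) := by
  -- the Gibbs measure is the tilted measure
  have hρ_def : (π.withDensity fun g =>
      ENNReal.ofReal (Real.exp (-(h g)) / ∫ g', Real.exp (-(h g')) ∂π))
      = π.tilted (fun g => -(h g)) := rfl
  set ρstar := π.tilted (fun g => -(h g)) with hρstar
  -- basic facts
  have hexp_int : Integrable (fun g => Real.exp (-(h g))) π := by
    refine Integrable.mono' (integrable_const (Real.exp C)) ?_ ?_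
    · exact (hmeas.neg.exp).aestronglyMeasurable
    · filter_upwards with g
      rw [Real.norm_eq_abs, abs_of_pos (Real.exp_pos _)]
      exact Real.exp_le_exp.mpr ((neg_le_abs (h g)).trans (hbdd g))
  have hZpos : 0 < ∫ g, Real.exp (-(h g)) ∂π := integral_exp_pos hexp_int
  have hρ_prob : IsProbabilityMeasure ρstar := isProbabilityMeasure_tilted hexp_int
  have hρ_ac : ρstar ≪ π := tilted_absolutelyContinuous π _
  have hπ_ac : π ≪ ρstar := absolutelyContinuous_tilted hexp_int
  have h_int : ∀ (μ : Measure G), IsProbabilityMeasure μ → Integrable h μ := by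
    intro μ _
    refine Integrable.mono' (integrable_const C) hmeas.aestronglyMeasurable ?_
    filter_upwards with g using (Real.norm_eq_abs _ ▸ hbdd g)
  -- llr of the Gibbs measure
  have hllr : llr ρstar π =ᵐ[ρstar]
      fun g => -(h g) - Real.log (∫ g', Real.exp (-(h g')) ∂π) :=
    hρ_ac.ae_le (log_rnDeriv_tilted_left_self hexp_int)
  have hllr_int : Integrable (llr ρstar π) ρstar := by
    rw [integrable_congr hllr]
    exact ((h_int ρstar hρ_prob).neg.sub (integrable_const _))
  -- the value of the objective at the Gibbs measure
  have hval : (∫ g, h g ∂ρstar) + ∫ g, llr ρstar π g ∂ρstar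
      = -(Real.log (∫ g, Real.exp (-(h g)) ∂π)) := by
    rw [integral_congr_ae hllr]
    have hsub : ∫ g, (-(h g) - Real.log (∫ g', Real.exp (-(h g')) ∂π)) ∂ρstar
        = (∫ g, -(h g) ∂ρstar) - ∫ _, Real.log (∫ g', Real.exp (-(h g')) ∂π) ∂ρstar :=
      integral_sub (h_int ρstar hρ_prob).neg (integrable_const _)
    rw [hsub, integral_neg, integral_const]
    simp only [measure_univ, probReal_univ, ENNReal.toReal_one, smul_eq_mul, one_mul]
    ring
  constructor
  · constructor
    · exact ⟨ρstar, hρ_prob, hρ_ac, hllr_int, hval.symm⟩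
    · rintro x ⟨ρ, hρprob, hρπ, hρint, rfl⟩
      have hρρstar : ρ ≪ ρstar := hρπ.trans hπ_ac
      have hkey : ∫ g, llr ρ ρstar g ∂ρ
          = ∫ g, llr ρ π g ∂ρ - ∫ g, -(h g) ∂ρ + Real.log (∫ g, Real.exp (-(h g)) ∂π) :=
        integral_llr_tilted_right hρπ (h_int ρ hρprob).neg hexp_int hρint
      have hkl_int : Integrable (llr ρ ρstar) ρ :=
        integrable_llr_tilted_right hρπ (h_int ρ hρprob).neg hρint hexp_int
      have hnn : 0 ≤ ∫ g, llr ρ ρstar g ∂ρ := kl_nonneg_aux hρρstar hkl_int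
      rw [hkey, integral_neg] at hnn
      have : ∫ g, Real.log ((ρ.rnDeriv π g).toReal) ∂ρ = ∫ g, llr ρ π g ∂ρ := rfl
      rw [this]
      linarith
  · rw [hρ_def]
    exact hval
end

section
/- For any probability distribution ρ on a set G, any real-valued function L on G, and any λ > 0, it holds that E_{g'∼ρ} log E_{g∼ρ} exp(λ[L(g') - L(g)] - (λ²/2)[L(g') - L(g)]²) ≤ 0. -/
open MeasureTheory

/-- Symmetrization inequality:
`E_{g'∼ρ} log E_{g∼ρ} exp(λ[L g' - L g] - (λ²/2)[L g' - L g]²) ≤ 0`. -/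
theorem stmt2 {G : Type*} [MeasurableSpace G] (ρ : Measure G) [IsProbabilityMeasure ρ]
    (L : G → ℝ) (hL : Measurable L) (l : ℝ) (hl : 0 < l) :
    (∫ g', Real.log (∫ g, Real.exp (l * (L g' - L g) - l ^ 2 / 2 * (L g' - L g) ^ 2) ∂ρ) ∂ρ)
      ≤ 0 := by
  set F : G → G → ℝ := fun g' g => l * (L g' - L g) - l ^ 2 / 2 * (L g' - L g) ^ 2 with hF
  have hFle : ∀ a b, F a b ≤ 1 / 2 := by
    intro a b
    have h := sq_nonneg (l * (L a - L b) - 1)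
    simp only [hF]
    nlinarith
  have hexble : ∀ a b, Real.exp (F a b) ≤ Real.exp (1 / 2) := fun a b =>
    Real.exp_le_exp.2 (hFle a b)
  have hmeasF : Measurable fun p : G × G => Real.exp (F p.1 p.2) := by
    apply Measurable.exp
    exact ((measurable_const.mul ((hL.comp measurable_fst).sub (hL.comp measurable_snd)))).sub
      (measurable_const.mul (((hL.comp measurable_fst).sub (hL.comp measurable_snd)).pow
        measurable_const))
  have hintP : Integrable (fun p : G × G => Real.exp (F p.1 p.2)) (ρ.prod ρ) := by
    refine (integrable_const (Real.exp (1 / 2))).mono' hmeasF.aestronglyMeasurable ?_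
    filter_upwards with p
    rw [Real.norm_eq_abs, abs_of_pos (Real.exp_pos _)]
    exact hexble p.1 p.2
  -- inner integrability
  have hint1 : ∀ g', Integrable (fun g => Real.exp (F g' g)) ρ := by
    intro g'
    refine (integrable_const (Real.exp (1 / 2))).mono'
      ((Real.measurable_exp.comp ?_).aestronglyMeasurable) ?_
    · exact ((measurable_const.mul (measurable_const.sub hL))).sub
        (measurable_const.mul ((measurable_const.sub hL).pow measurable_const))
    · filter_upwards with g
      rw [Real.norm_eq_abs, abs_of_pos (Real.exp_pos _)]
      exact hexble g' g
  set f : G → ℝ := fun g' => ∫ g, Real.exp (F g' g) ∂ρ with hf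
  have hfpos : ∀ g', 0 < f g' := by
    intro g'
    rw [hf]
    rw [integral_pos_iff_support_of_nonneg_ae
      (Filter.Eventually.of_forall fun g => (Real.exp_pos _).le) (hint1 g')]
    have : (Function.support fun g => Real.exp (F g' g)) = Set.univ := by
      ext g; simp [Function.support, (Real.exp_pos _).ne']
    rw [this]
    simp
  have hfmeas : Measurable f := by
    exact (StronglyMeasurable.integral_prod_right (f := fun g' g => Real.exp (F g' g))
      hmeasF.stronglyMeasurable).measurable
  have hfint : Integrable f ρ := by
    refine (integrable_const (Real.exp (1 / 2))).mono' hfmeas.aestronglyMeasurable ?_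
    filter_upwards with g'
    rw [Real.norm_eq_abs, abs_of_pos (hfpos g')]
    calc f g' ≤ ∫ _, Real.exp (1 / 2) ∂ρ :=
          integral_mono (hint1 g') (integrable_const _) fun g => hexble g' g
      _ = Real.exp (1 / 2) := by simp
  -- double integral ≤ 1
  have hT : ∫ p : G × G, Real.exp (F p.1 p.2) ∂(ρ.prod ρ) ≤ 1 := by
    have hswap : ∫ p : G × G, Real.exp (F p.2 p.1) ∂(ρ.prod ρ)
        = ∫ p : G × G, Real.exp (F p.1 p.2) ∂(ρ.prod ρ) :=
      integral_prod_swap (fun p : G × G => Real.exp (F p.1 p.2))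
    have hintP' : Integrable (fun p : G × G => Real.exp (F p.2 p.1)) (ρ.prod ρ) := by
      refine (integrable_const (Real.exp (1 / 2))).mono' ?_ ?_
      · exact (Real.measurable_exp.comp (((measurable_const.mul ((hL.comp measurable_snd).sub
          (hL.comp measurable_fst)))).sub (measurable_const.mul (((hL.comp measurable_snd).sub
          (hL.comp measurable_fst)).pow measurable_const)))).aestronglyMeasurable
      · filter_upwards with p
        rw [Real.norm_eq_abs, abs_of_pos (Real.exp_pos _)]
        exact hexble p.2 p.1
    have hsum : ∫ p : G × G, (Real.exp (F p.1 p.2) + Real.exp (F p.2 p.1)) ∂(ρ.prod ρ) ≤ 2 := by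
      have hpt : ∀ p : G × G, Real.exp (F p.1 p.2) + Real.exp (F p.2 p.1) ≤ 2 := by
        intro p
        have hsq : (L p.2 - L p.1) ^ 2 = (L p.1 - L p.2) ^ 2 := by ring
        have hcosh := Real.cosh_le_exp_half_sq (l * (L p.1 - L p.2))
        have hc : Real.cosh (l * (L p.1 - L p.2))
            = (Real.exp (l * (L p.1 - L p.2)) + Real.exp (-(l * (L p.1 - L p.2)))) / 2 :=
          Real.cosh_eq _
        have key : Real.exp (l * (L p.1 - L p.2)) + Real.exp (-(l * (L p.1 - L p.2)))
            ≤ 2 * Real.exp ((l * (L p.1 - L p.2)) ^ 2 / 2) := by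
          rw [hc] at hcosh; linarith
        have e1 : F p.1 p.2 = l * (L p.1 - L p.2) - (l * (L p.1 - L p.2)) ^ 2 / 2 := by
          simp only [hF]; ring
        have e2 : F p.2 p.1 = -(l * (L p.1 - L p.2)) - (l * (L p.1 - L p.2)) ^ 2 / 2 := by
          simp only [hF]; rw [hsq]; ring
        rw [e1, e2, Real.exp_sub, Real.exp_sub, ← add_div, div_le_iff₀ (Real.exp_pos _)]
        calc Real.exp (l * (L p.1 - L p.2)) + Real.exp (-(l * (L p.1 - L p.2)))
            ≤ 2 * Real.exp ((l * (L p.1 - L p.2)) ^ 2 / 2) := key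
          _ = 2 * Real.exp ((l * (L p.1 - L p.2)) ^ 2 / 2) := rfl
      calc ∫ p : G × G, (Real.exp (F p.1 p.2) + Real.exp (F p.2 p.1)) ∂(ρ.prod ρ)
          ≤ ∫ _ : G × G, (2 : ℝ) ∂(ρ.prod ρ) :=
            integral_mono (hintP.add hintP') (integrable_const _) hpt
        _ = 2 := by simp
    rw [integral_add hintP hintP', hswap] at hsum
    linarith
  -- ∫ f ≤ 1
  have hIf : ∫ g', f g' ∂ρ ≤ 1 := by
    exact le_trans (le_of_eq (integral_prod (fun p : G × G => Real.exp (F p.1 p.2)) hintP).symm) hT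
  -- finish
  by_cases hlog : Integrable (fun g' => Real.log (f g')) ρ
  · calc ∫ g', Real.log (f g') ∂ρ ≤ ∫ g', (f g' - 1) ∂ρ := by
          refine integral_mono hlog (hfint.sub (integrable_const 1)) fun g' => ?_
          exact Real.log_le_sub_one_of_pos (hfpos g')
      _ = (∫ g', f g' ∂ρ) - 1 := by
          rw [integral_sub hfint (integrable_const 1)]; simp
      _ ≤ 0 := by linarith
  · rw [integral_undef hlog]
end

section
/- Let μ be a probability measure on a space A and W: A → ℝ measurable such that λ ↦ (1/λ) log E_{a∼μ} exp(-λ W(a)) is defined on an interval of positive reals. Then this map is nondecreasing on that interval; indeed its derivative equals (1/λ²) KL(μ_{-λW}, μ) ≥ 0, where μ_{-λW} is the Gibbs distribution with density proportional to exp(-λ W). -/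
open MeasureTheory
open Real
open scoped ENNReal NNReal

lemma exp_interp {c c1 c2 t : ℝ} (h1 : c1 ≤ c) (h2 : c ≤ c2) :
    Real.exp (c * t) ≤ Real.exp (c1 * t) + Real.exp (c2 * t) := by
  rcases le_total 0 t with ht | ht
  · exact le_add_of_nonneg_of_le (Real.exp_pos _).le
      (Real.exp_le_exp.2 (mul_le_mul_of_nonneg_right h2 ht))
  · exact le_add_of_le_of_nonneg
      (Real.exp_le_exp.2 (mul_le_mul_of_nonpos_right h1 ht)) (Real.exp_pos _).le

lemma abs_le_exp_add {δ t : ℝ} (hδ : 0 < δ) :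
    |t| ≤ (Real.exp (δ * t) + Real.exp (-δ * t)) / δ := by
  rw [le_div_iff₀ hδ]
  have h1 : δ * |t| ≤ Real.exp (δ * |t|) :=
    le_trans (by linarith) (Real.add_one_le_exp (δ * |t|))
  have h2 : Real.exp (δ * |t|) ≤ Real.exp (δ * t) + Real.exp (-δ * t) := by
    rcases abs_cases t with ⟨h, _⟩ | ⟨h, _⟩
    · rw [h]; exact le_add_of_le_of_nonneg le_rfl (Real.exp_pos _).le
    · rw [h, mul_neg, ← neg_mul]; exact le_add_of_nonneg_of_le (Real.exp_pos _).le le_rfl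
  calc |t| * δ = δ * |t| := mul_comm _ _
    _ ≤ _ := h1.trans h2

lemma deriv_Z {A : Type*} [MeasurableSpace A] (μ : Measure A) [IsProbabilityMeasure μ]
    (W : A → ℝ) (hW : Measurable W) {l δ : ℝ} (hδ : 0 < δ)
    (h1 : Integrable (fun a => Real.exp (-((l - 2*δ) * W a))) μ)
    (h2 : Integrable (fun a => Real.exp (-((l + 2*δ) * W a))) μ) :
    Integrable (fun a => W a * Real.exp (-(l * W a))) μ ∧
    HasDerivAt (fun x => ∫ a, Real.exp (-(x * W a)) ∂μ)
      (-∫ a, W a * Real.exp (-(l * W a)) ∂μ) l := by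
  set bound : A → ℝ := fun a =>
    (2/δ) * (Real.exp (-((l - 2*δ) * W a)) + Real.exp (-((l + 2*δ) * W a))) with hbdef
  have key : ∀ (x : ℝ), x ∈ Metric.ball l δ → ∀ a,
      ‖-(W a * Real.exp (-(x * W a)))‖ ≤ bound a := by
    intro x hx a
    rw [Real.ball_eq_Ioo] at hx
    have hx1 : l - δ < x := hx.1
    have hx2 : x < l + δ := hx.2
    rw [norm_neg, norm_mul, Real.norm_eq_abs, Real.norm_eq_abs, Real.abs_exp]
    have hab := abs_le_exp_add (t := W a) hδ
    have step1 : |W a| * Real.exp (-(x * W a)) ≤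
        ((Real.exp (δ * W a) + Real.exp (-δ * W a)) / δ) * Real.exp (-(x * W a)) :=
      mul_le_mul_of_nonneg_right hab (Real.exp_pos _).le
    have e1 : Real.exp (δ * W a) * Real.exp (-(x * W a)) = Real.exp ((δ - x) * W a) := by
      rw [← Real.exp_add]; ring_nf
    have e2 : Real.exp (-δ * W a) * Real.exp (-(x * W a)) = Real.exp ((-δ - x) * W a) := by
      rw [← Real.exp_add]; ring_nf
    have i1 : Real.exp ((δ - x) * W a) ≤
        Real.exp (-(l + 2*δ) * W a) + Real.exp (-(l - 2*δ) * W a) :=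
      exp_interp (by linarith) (by linarith)
    have i2 : Real.exp ((-δ - x) * W a) ≤
        Real.exp (-(l + 2*δ) * W a) + Real.exp (-(l - 2*δ) * W a) :=
      exp_interp (by linarith) (by linarith)
    have : ((Real.exp (δ * W a) + Real.exp (-δ * W a)) / δ) * Real.exp (-(x * W a))
        = (Real.exp ((δ - x) * W a) + Real.exp ((-δ - x) * W a)) / δ := by
      rw [div_mul_eq_mul_div, add_mul, e1, e2]
    rw [this] at step1
    refine step1.trans ?_
    rw [hbdef]
    have hne : Real.exp (-(l + 2*δ) * W a) = Real.exp (-((l + 2*δ) * W a)) := by ring_nf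
    have hne' : Real.exp (-(l - 2*δ) * W a) = Real.exp (-((l - 2*δ) * W a)) := by ring_nf
    rw [hne, hne'] at i1 i2
    rw [div_le_iff₀ hδ]
    have : (2/δ) * (Real.exp (-((l - 2*δ) * W a)) + Real.exp (-((l + 2*δ) * W a))) * δ
        = 2 * (Real.exp (-((l - 2*δ) * W a)) + Real.exp (-((l + 2*δ) * W a))) := by
      field_simp
    rw [this]
    linarith
  have hbound_int : Integrable bound μ := ((h1.add h2).const_mul _)
  have hF_meas : ∀ᶠ x in nhds l, AEStronglyMeasurable (fun a => Real.exp (-(x * W a))) μ :=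
    Filter.Eventually.of_forall fun x =>
      ((hW.const_mul x).neg.exp).aestronglyMeasurable
  have hF_int : Integrable (fun a => Real.exp (-(l * W a))) μ := by
    refine (h1.add h2).mono' ((hW.const_mul l).neg.exp).aestronglyMeasurable
      (Filter.Eventually.of_forall fun a => ?_)
    rw [Real.norm_eq_abs, Real.abs_exp]
    have : Real.exp (-(l * W a)) = Real.exp (-l * W a) := by ring_nf
    rw [this]
    have := exp_interp (c := -l) (c1 := -(l + 2*δ)) (c2 := -(l - 2*δ))
      (by linarith) (by linarith) (t := W a)
    calc Real.exp (-l * W a) ≤ Real.exp (-(l + 2*δ) * W a) + Real.exp (-(l - 2*δ) * W a) := this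
      _ = _ := by rw [neg_mul, neg_mul, add_comm]; rfl
  have hF'_meas : AEStronglyMeasurable (fun a => -(W a * Real.exp (-(l * W a)))) μ :=
    ((hW.mul ((hW.const_mul l).neg.exp)).neg).aestronglyMeasurable
  have h_diff : ∀ᵐ a ∂μ, ∀ x ∈ Metric.ball l δ,
      HasDerivAt (fun x => Real.exp (-(x * W a))) (-(W a * Real.exp (-(x * W a)))) x := by
    refine Filter.Eventually.of_forall fun a x _ => ?_
    have h0 : HasDerivAt (fun x : ℝ => -(x * W a)) (-W a) x := by
      simpa using ((hasDerivAt_id x).mul_const (-W a))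
    simpa [mul_comm] using h0.exp
  have := hasDerivAt_integral_of_dominated_loc_of_deriv_le (Metric.ball_mem_nhds l hδ) hF_meas hF_int hF'_meas
    (Filter.Eventually.of_forall fun a x hx => key x hx a) hbound_int h_diff
  refine ⟨(integrable_neg_iff).1 this.1, ?_⟩
  have := this.2
  rwa [integral_neg] at this

lemma kl_eq {A : Type*} [MeasurableSpace A] (μ : Measure A) [IsProbabilityMeasure μ]
    (W : A → ℝ) (hW : Measurable W) (l : ℝ) {C : ℝ} (hC : 0 < C)
    (hint : Integrable (fun a => Real.exp (-(l * W a))) μ)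
    (hWint : Integrable (fun a => W a * Real.exp (-(l * W a))) μ) :
    ∫ a, Real.log (((μ.withDensity fun a =>
        ENNReal.ofReal (Real.exp (-(l * W a)) / C)).rnDeriv μ a).toReal)
      ∂(μ.withDensity fun a => ENNReal.ofReal (Real.exp (-(l * W a)) / C))
    = -(l / C) * (∫ a, W a * Real.exp (-(l * W a)) ∂μ)
      - (Real.log C / C) * (∫ a, Real.exp (-(l * W a)) ∂μ) := by
  set g : A → ℝ := fun a => Real.exp (-(l * W a)) / C with hg
  have hgmeas : Measurable g := ((hW.const_mul l).neg.exp).div_const C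
  have hgpos : ∀ a, 0 < g a := fun a => div_pos (Real.exp_pos _) hC
  set f : A → ℝ≥0∞ := fun a => ENNReal.ofReal (g a) with hf
  have hfmeas : Measurable f := hgmeas.ennreal_ofReal
  have hrn : (μ.withDensity f).rnDeriv μ =ᵐ[μ] f := Measure.rnDeriv_withDensity μ hfmeas
  have hac : μ.withDensity f ≪ μ := withDensity_absolutelyContinuous μ f
  have hrn' : (μ.withDensity f).rnDeriv μ =ᵐ[μ.withDensity f] f := hac.ae_eq hrn
  have step1 : ∫ a, Real.log (((μ.withDensity f).rnDeriv μ a).toReal) ∂(μ.withDensity f)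
      = ∫ a, Real.log (g a) ∂(μ.withDensity f) := by
    refine integral_congr_ae (hrn'.mono fun a ha => ?_)
    dsimp only; rw [ha]; simp only [hf, ENNReal.toReal_ofReal (hgpos a).le]
  have hfnn : f = fun a => ((g a).toNNReal : ℝ≥0∞) := by
    funext a; rfl
  have step2 : ∫ a, Real.log (g a) ∂(μ.withDensity f)
      = ∫ a, g a * Real.log (g a) ∂μ := by
    rw [hfnn, integral_withDensity_eq_integral_smul
      (hgmeas.real_toNNReal) (fun a => Real.log (g a))]
    congr 1; funext a
    rw [NNReal.smul_def, smul_eq_mul, Real.coe_toNNReal _ (hgpos a).le]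
  have logg : ∀ a, Real.log (g a) = -(l * W a) - Real.log C := by
    intro a
    rw [hg, Real.log_div (Real.exp_ne_zero _) hC.ne', Real.log_exp]
  have step3 : ∫ a, g a * Real.log (g a) ∂μ
      = ∫ a, ((-(l / C)) * (W a * Real.exp (-(l * W a)))
          + (-(Real.log C / C)) * Real.exp (-(l * W a))) ∂μ := by
    refine integral_congr_ae (Filter.Eventually.of_forall fun a => ?_)
    simp only [hg]
    rw [Real.log_div (Real.exp_ne_zero _) hC.ne', Real.log_exp]
    field_simp; ring
  rw [step1, step2, step3, integral_add (hWint.const_mul _) (hint.const_mul _),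
    integral_const_mul, integral_const_mul]
  ring

lemma elp_eq {A : Type*} [MeasurableSpace A] (μ : Measure A) [IsProbabilityMeasure μ]
    (W : A → ℝ) {p : ℝ} (hp : 0 < p)
    (hint : Integrable (fun a => Real.exp (-(p * W a))) μ) :
    eLpNorm (fun a => Real.exp (-W a)) (ENNReal.ofReal p) μ
      = ENNReal.ofReal ((∫ a, Real.exp (-(p * W a)) ∂μ) ^ (1/p)) := by
  have hp0 : ENNReal.ofReal p ≠ 0 := by
    simp [ENNReal.ofReal_eq_zero, not_le, hp]
  rw [eLpNorm_eq_lintegral_rpow_enorm_toReal hp0 ENNReal.ofReal_ne_top,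
    ENNReal.toReal_ofReal hp.le]
  have key : ∀ a, ‖Real.exp (-W a)‖ₑ ^ p
      = ENNReal.ofReal (Real.exp (-(p * W a))) := by
    intro a
    rw [← ofReal_norm, Real.norm_eq_abs, Real.abs_exp,
      ENNReal.ofReal_rpow_of_pos (Real.exp_pos _), ← Real.exp_mul]
    ring_nf
  simp_rw [key]
  rw [← ofReal_integral_eq_lintegral_ofReal hint
      (Filter.Eventually.of_forall fun a => (Real.exp_pos _).le),
    ENNReal.ofReal_rpow_of_nonneg (integral_nonneg fun a => (Real.exp_pos _).le)
      (by positivity)]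


/-- The map `λ ↦ (1/λ) log E_μ exp(-λ W)` is nondecreasing on an interval of positive reals
on which it is defined, and its derivative equals `(1/λ²) KL(μ_{-λW}, μ) ≥ 0`, where
`μ_{-λW}` is the Gibbs distribution with density proportional to `exp(-λ W)`. -/
theorem stmt4 {A : Type*} [MeasurableSpace A] (μ : Measure A) [IsProbabilityMeasure μ]
    (W : A → ℝ) (hW : Measurable W) (s : Set ℝ) (hs : s ⊆ Set.Ioi (0:ℝ))
    (hconn : s.OrdConnected)
    (hint : ∀ l ∈ s, Integrable (fun a => Real.exp (-(l * W a))) μ) :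
    MonotoneOn (fun l => 1 / l * Real.log (∫ a, Real.exp (-(l * W a)) ∂μ)) s ∧
    ∀ l ∈ interior s,
      HasDerivAt (fun l => 1 / l * Real.log (∫ a, Real.exp (-(l * W a)) ∂μ))
        (1 / l ^ 2 *
          ∫ a, Real.log (((μ.withDensity fun a =>
              ENNReal.ofReal (Real.exp (-(l * W a)) / ∫ a', Real.exp (-(l * W a')) ∂μ)).rnDeriv μ a).toReal)
            ∂(μ.withDensity fun a =>
              ENNReal.ofReal (Real.exp (-(l * W a)) / ∫ a', Real.exp (-(l * W a')) ∂μ))) l ∧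
      0 ≤ ∫ a, Real.log (((μ.withDensity fun a =>
              ENNReal.ofReal (Real.exp (-(l * W a)) / ∫ a', Real.exp (-(l * W a')) ∂μ)).rnDeriv μ a).toReal)
            ∂(μ.withDensity fun a =>
              ENNReal.ofReal (Real.exp (-(l * W a)) / ∫ a', Real.exp (-(l * W a')) ∂μ)) := by
  have hZpos : ∀ p ∈ s, 0 < ∫ a, Real.exp (-(p * W a)) ∂μ := by
    intro p hp
    have h := ProbabilityTheory.mgf_pos (X := W) (μ := μ) (t := -p)
      (by simpa [neg_mul] using hint p hp)
    simpa [ProbabilityTheory.mgf, neg_mul] using h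
  have hmono : MonotoneOn (fun l => 1 / l * Real.log (∫ a, Real.exp (-(l * W a)) ∂μ)) s := by
    intro l hl m hm hlm
    have hl0 : (0:ℝ) < l := hs hl
    have hm0 : (0:ℝ) < m := hs hm
    have h := eLpNorm_le_eLpNorm_of_exponent_le (μ := μ)
      (ENNReal.ofReal_le_ofReal hlm) ((hW.neg.exp).aestronglyMeasurable)
      (f := fun a => Real.exp (-W a))
    rw [elp_eq μ W hl0 (hint l hl), elp_eq μ W hm0 (hint m hm)] at h
    have h2 : (∫ a, Real.exp (-(l * W a)) ∂μ) ^ (1/l)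
        ≤ (∫ a, Real.exp (-(m * W a)) ∂μ) ^ (1/m) := by
      rwa [ENNReal.ofReal_le_ofReal_iff (by positivity)] at h
    have h3 := Real.log_le_log (Real.rpow_pos_of_pos (hZpos l hl) _) h2
    rwa [Real.log_rpow (hZpos l hl), Real.log_rpow (hZpos m hm)] at h3
  refine ⟨hmono, fun l hlint => ?_⟩
  have hl' : l ∈ s := interior_subset hlint
  have hl0 : (0:ℝ) < l := hs hl'
  obtain ⟨ε, hε, hball⟩ := Metric.isOpen_iff.1 isOpen_interior l hlint
  set δ := ε / 3 with hδdef
  have hδ : 0 < δ := by positivity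
  have hmem1 : l - 2*δ ∈ s := by
    apply interior_subset; apply hball
    rw [Real.ball_eq_Ioo]; constructor <;> [skip; skip] <;> simp [hδdef] <;> linarith
  have hmem2 : l + 2*δ ∈ s := by
    apply interior_subset; apply hball
    rw [Real.ball_eq_Ioo]; constructor <;> [skip; skip] <;> simp [hδdef] <;> linarith
  obtain ⟨hWint, hZd⟩ := deriv_Z μ W hW hδ (hint _ hmem1) (hint _ hmem2)
  have hZl : 0 < ∫ a, Real.exp (-(l * W a)) ∂μ := hZpos l hl'
  have hKL := kl_eq μ W hW l hZl (hint l hl') hWint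
  have h1 : HasDerivAt (fun x : ℝ => 1/x) (-(1/l^2)) l := by
    simpa [one_div] using hasDerivAt_inv hl0.ne'
  have h2 : HasDerivAt (fun x => Real.log (∫ a, Real.exp (-(x * W a)) ∂μ))
      ((-∫ a, W a * Real.exp (-(l * W a)) ∂μ) / (∫ a, Real.exp (-(l * W a)) ∂μ)) l :=
    hZd.log hZl.ne'
  have hprod := h1.mul h2
  have hder : HasDerivAt (fun l => 1 / l * Real.log (∫ a, Real.exp (-(l * W a)) ∂μ))
      (1 / l ^ 2 *
        ∫ a, Real.log (((μ.withDensity fun a =>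
            ENNReal.ofReal (Real.exp (-(l * W a)) / ∫ a', Real.exp (-(l * W a')) ∂μ)).rnDeriv μ a).toReal)
          ∂(μ.withDensity fun a =>
            ENNReal.ofReal (Real.exp (-(l * W a)) / ∫ a', Real.exp (-(l * W a')) ∂μ))) l := by
    refine hprod.congr_deriv ?_
    rw [hKL]
    field_simp
    ring
  refine ⟨hder, ?_⟩
  have hDnn : 0 ≤ 1 / l ^ 2 *
      ∫ a, Real.log (((μ.withDensity fun a =>
          ENNReal.ofReal (Real.exp (-(l * W a)) / ∫ a', Real.exp (-(l * W a')) ∂μ)).rnDeriv μ a).toReal)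
        ∂(μ.withDensity fun a =>
          ENNReal.ofReal (Real.exp (-(l * W a)) / ∫ a', Real.exp (-(l * W a')) ∂μ)) := by
    have htend := hasDerivAt_iff_tendsto_slope.1 hder
    have h2' := htend.mono_left (nhdsWithin_mono l (fun x hx => ne_of_gt hx : Set.Ioi l ⊆ {l}ᶜ))
    refine ge_of_tendsto h2' ?_
    have hmem : ∀ᶠ x in nhdsWithin l (Set.Ioi l), x ∈ s :=
      eventually_nhdsWithin_of_eventually_nhds
        ((isOpen_interior.eventually_mem hlint).mono fun x hx => interior_subset hx)
    filter_upwards [hmem, self_mem_nhdsWithin] with x hxs hxl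
    have hFle := hmono hl' hxs (le_of_lt hxl)
    rw [slope_def_field]
    have : l < x := hxl
    apply div_nonneg <;> linarith
  have hl2 : (0:ℝ) < 1 / l ^ 2 := by positivity
  nlinarith [mul_nonneg hDnn (sq_nonneg l)]
end

section
/- Let 𝒴 = ℝ, q > 1, and ℓ(y,y') = |y − y'|^q. For y₁ ≠ y₂ and p ∈ [0,1], the function y ↦ p|y − y₁|^q + (1−p)|y − y₂|^q attains its infimum at y* = (p^r y₁ + (1−p)^r y₂)/(p^r + (1−p)^r) with r = 1/(q−1), and the infimum equals φ(p) = p(1−p) |y₂ − y₁|^q / (p^{1/(q−1)} + (1−p)^{1/(q−1)})^{q−1}. -/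
open Real Set

private lemma rq_pow {q x : ℝ} (hq : 1 < q) (hx : 0 ≤ x) :
    (x ^ (1 / (q - 1))) ^ q = x * x ^ (1 / (q - 1)) := by
  have h1 : (0:ℝ) < q - 1 := by linarith
  have hmul : 1 / (q - 1) * q = 1 + 1 / (q - 1) := by field_simp; ring
  rw [← Real.rpow_mul hx, hmul, Real.rpow_add' hx (by positivity), Real.rpow_one]

private lemma rqm_pow {q x : ℝ} (hq : 1 < q) (hx : 0 ≤ x) :
    (x ^ (1 / (q - 1))) ^ (q - 1) = x := by
  have h1 : (0:ℝ) < q - 1 := by linarith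
  have hmul : 1 / (q - 1) * (q - 1) = 1 := by field_simp
  rw [← Real.rpow_mul hx, hmul, Real.rpow_one]

private lemma split_pow {q s : ℝ} (hq : 1 < q) (hs : 0 < s) :
    s ^ q = s ^ (q - 1) * s := by
  nth_rewrite 3 [← Real.rpow_one s]
  rw [← Real.rpow_add hs]
  norm_num

/-- For the `L_q` loss with `q > 1`, the function
`y ↦ p|y−y₁|^q + (1−p)|y−y₂|^q` attains its infimum at
`y* = (p^r y₁ + (1−p)^r y₂)/(p^r + (1−p)^r)` with `r = 1/(q−1)`, and the infimum equals
`p(1−p)|y₂−y₁|^q / (p^{1/(q−1)} + (1−p)^{1/(q−1)})^{q−1}`. -/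
theorem stmt7 (q : ℝ) (hq : 1 < q) (y₁ y₂ : ℝ) (hne : y₁ ≠ y₂)
    (p : ℝ) (hp : p ∈ Set.Icc (0:ℝ) 1) :
    IsMinOn (fun y : ℝ => p * |y - y₁| ^ q + (1 - p) * |y - y₂| ^ q) Set.univ
      ((p ^ (1 / (q - 1)) * y₁ + (1 - p) ^ (1 / (q - 1)) * y₂)
        / (p ^ (1 / (q - 1)) + (1 - p) ^ (1 / (q - 1)))) ∧
    p * |(p ^ (1 / (q - 1)) * y₁ + (1 - p) ^ (1 / (q - 1)) * y₂)
          / (p ^ (1 / (q - 1)) + (1 - p) ^ (1 / (q - 1))) - y₁| ^ q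
      + (1 - p) * |(p ^ (1 / (q - 1)) * y₁ + (1 - p) ^ (1 / (q - 1)) * y₂)
          / (p ^ (1 / (q - 1)) + (1 - p) ^ (1 / (q - 1))) - y₂| ^ q
      = p * (1 - p) * |y₂ - y₁| ^ q
          / (p ^ (1 / (q - 1)) + (1 - p) ^ (1 / (q - 1))) ^ (q - 1) := by
  obtain ⟨hp0, hp1⟩ := hp
  have h1 : (0:ℝ) < q - 1 := by linarith
  have hr : (0:ℝ) < 1 / (q - 1) := by positivity
  set r : ℝ := 1 / (q - 1) with hrdef
  set a : ℝ := p ^ r with hadef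
  set b : ℝ := (1 - p) ^ r with hbdef
  have ha0 : 0 ≤ a := Real.rpow_nonneg hp0 r
  have hb0 : 0 ≤ b := Real.rpow_nonneg (by linarith) r
  have hs : 0 < a + b := by
    rcases eq_or_lt_of_le hp0 with h | h
    · have hb1 : b = 1 := by rw [hbdef, ← h]; norm_num
      rw [hb1]; linarith
    · have : 0 < a := Real.rpow_pos_of_pos h r
      linarith
  set s : ℝ := a + b with hsdef
  have hK : 0 < s ^ (q - 1) := Real.rpow_pos_of_pos hs _
  have hKne : s ^ (q - 1) ≠ 0 := ne_of_gt hK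
  have hsne : s ≠ 0 := ne_of_gt hs
  set ys : ℝ := (a * y₁ + b * y₂) / s with hysdef
  set c : ℝ := |y₂ - y₁| with hcdef
  have hc0 : 0 ≤ c := abs_nonneg _
  have hd1 : ys - y₁ = b * (y₂ - y₁) / s := by
    rw [hysdef, eq_div_iff hsne, sub_mul, div_mul_cancel₀ _ hsne, hsdef]; ring
  have hd2 : ys - y₂ = a * (y₁ - y₂) / s := by
    rw [hysdef, eq_div_iff hsne, sub_mul, div_mul_cancel₀ _ hsne, hsdef]; ring
  have habs1 : |ys - y₁| = b * c / s := by
    rw [hd1, abs_div, abs_mul, abs_of_nonneg hb0, abs_of_pos hs, hcdef]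
  have habs2 : |ys - y₂| = a * c / s := by
    rw [hd2, abs_div, abs_mul, abs_of_nonneg ha0, abs_of_pos hs, hcdef,
      abs_sub_comm]
  have hbq : b ^ q = (1 - p) * b := rq_pow hq (by linarith)
  have haq : a ^ q = p * a := rq_pow hq hp0
  have hval : p * |ys - y₁| ^ q + (1 - p) * |ys - y₂| ^ q
      = p * (1 - p) * c ^ q / s ^ (q - 1) := by
    rw [habs1, habs2, Real.div_rpow (by positivity) hs.le,
      Real.div_rpow (by positivity) hs.le,
      Real.mul_rpow hb0 hc0, Real.mul_rpow ha0 hc0, hbq, haq,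
      split_pow hq hs]
    field_simp
    ring
  refine ⟨?_, hval⟩
  intro y _
  simp only [Set.mem_setOf_eq]
  show p * |ys - y₁| ^ q + (1 - p) * |ys - y₂| ^ q
      ≤ p * |y - y₁| ^ q + (1 - p) * |y - y₂| ^ q
  rw [hval]
  set u : ℝ := |y - y₁| with hudef
  set v : ℝ := |y - y₂| with hvdef
  have hu0 : 0 ≤ u := abs_nonneg _
  have hv0 : 0 ≤ v := abs_nonneg _
  have hcuv : c ≤ u + v := by
    rw [hcdef, hudef, hvdef]
    calc |y₂ - y₁| ≤ |y₂ - y| + |y - y₁| := abs_sub_le y₂ y y₁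
      _ = |y - y₁| + |y - y₂| := by rw [abs_sub_comm y₂ y]; ring
  rcases eq_or_lt_of_le hp0 with h0 | h0
  · rw [← h0]
    simp only [zero_mul, mul_zero, zero_div]
    positivity
  rcases eq_or_lt_of_le hp1 with h1' | h1'
  · rw [h1']
    simp only [sub_self, mul_zero, zero_mul, zero_div]
    positivity
  -- main case : 0 < p < 1
  have hp1' : 0 < 1 - p := by linarith
  have ha : 0 < a := Real.rpow_pos_of_pos h0 r
  have hb : 0 < b := Real.rpow_pos_of_pos hp1' r
  set w₁ : ℝ := b / s with hw1def
  set w₂ : ℝ := a / s with hw2def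
  have hw1 : 0 < w₁ := by positivity
  have hw2 : 0 < w₂ := by positivity
  have hw : w₁ + w₂ = 1 := by
    rw [hw1def, hw2def, ← add_div, add_comm b a, ← hsdef, div_self hsne]
  have hconv := (convexOn_rpow hq.le).2 (show (u / w₁) ∈ Ici (0:ℝ) by
      simp [le_div_iff₀ hw1, hu0])
    (show (v / w₂) ∈ Ici (0:ℝ) by simp [le_div_iff₀ hw2, hv0])
    hw1.le hw2.le hw
  simp only [smul_eq_mul] at hconv
  have hc1 : w₁ * (u / w₁) = u := by field_simp
  have hc2 : w₂ * (v / w₂) = v := by field_simp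
  rw [hc1, hc2] at hconv
  have hw1pow : w₁ ^ (q - 1) = (1 - p) / s ^ (q - 1) := by
    rw [hw1def, Real.div_rpow hb0 hs.le, hbdef, rqm_pow hq (le_of_lt hp1')]
  have hw2pow : w₂ ^ (q - 1) = p / s ^ (q - 1) := by
    rw [hw2def, Real.div_rpow ha0 hs.le, hadef, rqm_pow hq hp0]
  have e₁ : w₁ * (u / w₁) ^ q = s ^ (q - 1) / (1 - p) * u ^ q := by
    rw [Real.div_rpow hu0 hw1.le, split_pow hq hw1, hw1pow]
    field_simp
  have e₂ : w₂ * (v / w₂) ^ q = s ^ (q - 1) / p * v ^ q := by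
    rw [Real.div_rpow hv0 hw2.le, split_pow hq hw2, hw2pow]
    field_simp
  rw [e₁, e₂] at hconv
  have hcq : c ^ q ≤ (u + v) ^ q := Real.rpow_le_rpow hc0 hcuv (by linarith)
  rw [div_le_iff₀ hK]
  calc p * (1 - p) * c ^ q
      ≤ p * (1 - p) * (s ^ (q - 1) / (1 - p) * u ^ q + s ^ (q - 1) / p * v ^ q) := by
        exact mul_le_mul_of_nonneg_left (le_trans hcq hconv) (by positivity)
    _ = (p * u ^ q + (1 - p) * v ^ q) * s ^ (q - 1) := by
        field_simp
end

section
/- With φ(p) = p(1−p)|y₂−y₁|^q / (p^{1/(q−1)} + (1−p)^{1/(q−1)})^{q−1} for q > 1, the second derivative satisfies φ''(p) = −(q/(q−1)) · [p(1−p)]^{(2−q)/(q−1)} · |y₂−y₁|^q / (p^{1/(q−1)} + (1−p)^{1/(q−1)})^{q+1} for p ∈ (0,1). -/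
open Real Set Filter

/-- Second derivative of the optimal mixed `L_q` loss:
`φ''(p) = −(q/(q−1)) [p(1−p)]^{(2−q)/(q−1)} |y₂−y₁|^q / (p^{1/(q−1)} + (1−p)^{1/(q−1)})^{q+1}`. -/
theorem stmt8 (q : ℝ) (hq : 1 < q) (y₁ y₂ : ℝ) (hne : y₁ ≠ y₂)
    (p : ℝ) (hp : p ∈ Set.Ioo (0:ℝ) 1) :
    deriv (deriv (fun x : ℝ =>
        x * (1 - x) * |y₂ - y₁| ^ q
          / (x ^ (1 / (q - 1)) + (1 - x) ^ (1 / (q - 1))) ^ (q - 1))) p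
      = -(q / (q - 1)) * (p * (1 - p)) ^ ((2 - q) / (q - 1)) * |y₂ - y₁| ^ q
          / (p ^ (1 / (q - 1)) + (1 - p) ^ (1 / (q - 1))) ^ (q + 1) := by
  obtain ⟨hp0, hp1⟩ := hp
  have hs0 : (0:ℝ) < 1 - p := by linarith
  have hq1 : (0:ℝ) < q - 1 := by linarith
  set r : ℝ := 1 / (q - 1) with hrdef
  have hr : 0 < r := by positivity
  have hrq : r * (q - 1) = 1 := by
    rw [hrdef]; field_simp
  set C : ℝ := |y₂ - y₁| ^ q with hC
  set ψ : ℝ → ℝ := fun x => C * (x ^ (-r) + (1 - x) ^ (-r)) ^ (1 - q) with hψ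
  set ψ1 : ℝ → ℝ := fun x =>
    C * ((x ^ (-r - 1) - (1 - x) ^ (-r - 1)) * (x ^ (-r) + (1 - x) ^ (-r)) ^ (-q)) with hψ1
  have hmem : Ioo (0:ℝ) 1 ∈ nhds p := Ioo_mem_nhds hp0 hp1
  -- Step 1: the original function agrees with ψ on (0,1)
  have L1 : ∀ x ∈ Ioo (0:ℝ) 1,
      x * (1 - x) * C / (x ^ r + (1 - x) ^ r) ^ (q - 1) = ψ x := by
    rintro x ⟨hx0, hx1'⟩
    have hx1 : (0:ℝ) < 1 - x := by linarith
    have hS : (0:ℝ) < x ^ r + (1 - x) ^ r := by positivity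
    have e1 : x ^ (-r) * x ^ r = 1 := by
      rw [← Real.rpow_add hx0]; simp
    have e2 : (1 - x) ^ (-r) * (1 - x) ^ r = 1 := by
      rw [← Real.rpow_add hx1]; simp
    have hg : x ^ (-r) + (1 - x) ^ (-r)
        = (x * (1 - x)) ^ (-r) * (x ^ r + (1 - x) ^ r) := by
      rw [Real.mul_rpow hx0.le hx1.le]
      linear_combination (-((1 - x) ^ (-r))) * e1 + (-(x ^ (-r))) * e2
    show _ = C * (x ^ (-r) + (1 - x) ^ (-r)) ^ (1 - q)
    rw [hg, Real.mul_rpow (by positivity) hS.le,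
      ← Real.rpow_mul (by positivity : (0:ℝ) ≤ x * (1 - x))]
    have h1 : -r * (1 - q) = 1 := by linear_combination hrq
    rw [h1, Real.rpow_one, show (1 - q) = -(q - 1) by ring, Real.rpow_neg hS.le]
    have hSq : ((x ^ r + (1 - x) ^ r) ^ (q - 1)) ≠ 0 := by positivity
    field_simp
  -- Step 2: ψ has derivative ψ1 on (0,1)
  have L2 : ∀ x ∈ Ioo (0:ℝ) 1, HasDerivAt ψ (ψ1 x) x := by
    rintro x ⟨hx0, hx1'⟩
    have hx1 : (0:ℝ) < 1 - x := by linarith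
    have hg0 : (0:ℝ) < x ^ (-r) + (1 - x) ^ (-r) := by positivity
    have h1 : HasDerivAt (fun x : ℝ => x ^ (-r)) (-r * x ^ (-r - 1)) x :=
      Real.hasDerivAt_rpow_const (Or.inl hx0.ne')
    have hb : HasDerivAt (fun x : ℝ => 1 - x) (-1) x := by
      simpa using (hasDerivAt_id x).const_sub (1:ℝ)
    have h2 : HasDerivAt (fun x : ℝ => (1 - x) ^ (-r))
        ((-1) * (-r) * (1 - x) ^ (-r - 1)) x := hb.rpow_const (Or.inl hx1.ne')
    have hg : HasDerivAt (fun x : ℝ => x ^ (-r) + (1 - x) ^ (-r))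
        (-r * x ^ (-r - 1) + (-1) * (-r) * (1 - x) ^ (-r - 1)) x := h1.add h2
    have h3 := (hg.rpow_const (p := 1 - q) (Or.inl hg0.ne')).const_mul C
    convert h3 using 1
    case e'_4 => rfl
    case e'_5 => rfl
    have e : (1:ℝ) - q - 1 = -q := by ring
    rw [e]
    have key : (-r * x ^ (-r - 1) + -1 * -r * (1 - x) ^ (-r - 1)) * (1 - q)
        = x ^ (-r - 1) - (1 - x) ^ (-r - 1) := by
      linear_combination (x ^ (-r - 1) - (1 - x) ^ (-r - 1)) * hrq
    linear_combination (-(C * (x ^ (-r) + (1 - x) ^ (-r)) ^ (-q))) * key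
  -- Step 3: ψ1 has a derivative at p which equals the RHS
  have L3 : HasDerivAt ψ1
      (-(q / (q - 1)) * (p * (1 - p)) ^ ((2 - q) / (q - 1)) * C
        / (p ^ r + (1 - p) ^ r) ^ (q + 1)) p := by
    have hu : (0:ℝ) < p ^ (-r) := Real.rpow_pos_of_pos hp0 _
    have hv : (0:ℝ) < (1 - p) ^ (-r) := Real.rpow_pos_of_pos hs0 _
    have hg0 : (0:ℝ) < p ^ (-r) + (1 - p) ^ (-r) := by positivity
    have hb : HasDerivAt (fun x : ℝ => 1 - x) (-1) p := by
      simpa using (hasDerivAt_id p).const_sub (1:ℝ)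
    have h4 : HasDerivAt (fun x : ℝ => x ^ (-r - 1)) ((-r - 1) * p ^ (-r - 1 - 1)) p :=
      Real.hasDerivAt_rpow_const (Or.inl hp0.ne')
    have h5 : HasDerivAt (fun x : ℝ => (1 - x) ^ (-r - 1))
        ((-1) * (-r - 1) * (1 - p) ^ (-r - 1 - 1)) p := hb.rpow_const (Or.inl hs0.ne')
    have h6 := h4.sub h5
    have h1 : HasDerivAt (fun x : ℝ => x ^ (-r)) (-r * p ^ (-r - 1)) p :=
      Real.hasDerivAt_rpow_const (Or.inl hp0.ne')
    have h2 : HasDerivAt (fun x : ℝ => (1 - x) ^ (-r)) ((-1) * (-r) * (1 - p) ^ (-r - 1)) p :=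
      hb.rpow_const (Or.inl hs0.ne')
    have hg : HasDerivAt (fun x : ℝ => x ^ (-r) + (1 - x) ^ (-r))
        (-r * p ^ (-r - 1) + (-1) * (-r) * (1 - p) ^ (-r - 1)) p := h1.add h2
    have hgq := hg.rpow_const (p := -q) (Or.inl hg0.ne')
    have h7 := (h6.mul hgq).const_mul C
    convert h7 using 1
    case e'_4 => rfl
    case e'_5 => rfl
    case e'_8 => rfl
    -- now pure algebra
    set u : ℝ := p ^ (-r) with hudef
    set v : ℝ := (1 - p) ^ (-r) with hvdef
    set G : ℝ := (u + v) ^ (-q - 1) with hGdef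
    have hGpos : 0 < G := Real.rpow_pos_of_pos hg0 _
    have f1 : p ^ (-r - 1) = u / p := by
      rw [hudef, show (-r : ℝ) = -r - 1 + 1 by ring, Real.rpow_add_one hp0.ne']
      field_simp
      ring_nf
    have f2 : (1 - p) ^ (-r - 1) = v / (1 - p) := by
      rw [hvdef, show (-r : ℝ) = -r - 1 + 1 by ring, Real.rpow_add_one hs0.ne']
      field_simp
      ring_nf
    have f3 : p ^ (-r - 1 - 1) = u / p ^ (2:ℕ) := by
      rw [hudef, show (-r : ℝ) = -r - 1 - 1 + 1 + 1 by ring, Real.rpow_add_one hp0.ne',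
        Real.rpow_add_one hp0.ne']
      field_simp; ring
    have f4 : (1 - p) ^ (-r - 1 - 1) = v / (1 - p) ^ (2:ℕ) := by
      rw [hvdef, show (-r : ℝ) = -r - 1 - 1 + 1 + 1 by ring, Real.rpow_add_one hs0.ne',
        Real.rpow_add_one hs0.ne']
      field_simp; ring
    have f5 : (u + v) ^ (-q) = (u + v) * G := by
      rw [show (-q : ℝ) = -q - 1 + 1 by ring, Real.rpow_add_one hg0.ne', hGdef]
      ring
    -- RHS pieces
    have hpr : p ^ r = u⁻¹ := by
      rw [hudef, Real.rpow_neg hp0.le, inv_inv]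
    have hsr : (1 - p) ^ r = v⁻¹ := by
      rw [hvdef, Real.rpow_neg hs0.le, inv_inv]
    have hexp : (2 - q) / (q - 1) = r - 1 := by
      rw [hrdef]; field_simp; ring
    have hps : (p * (1 - p)) ^ ((2 - q) / (q - 1)) = u⁻¹ * v⁻¹ / (p * (1 - p)) := by
      rw [hexp, Real.rpow_sub (by positivity), Real.rpow_one, Real.mul_rpow hp0.le hs0.le,
        hpr, hsr]
    have huq : u ^ (q + 1) = u ^ (2:ℕ) / p := by
      rw [hudef, ← Real.rpow_natCast (p ^ (-r)) 2, ← Real.rpow_mul hp0.le, ← Real.rpow_mul hp0.le]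
      rw [show (-r * (q + 1) : ℝ) = -r * 2 + (-1) by linear_combination -hrq]
      rw [Real.rpow_add hp0, Real.rpow_neg_one, div_eq_mul_inv]
      norm_num
    have hvq : v ^ (q + 1) = v ^ (2:ℕ) / (1 - p) := by
      rw [hvdef, ← Real.rpow_natCast ((1 - p) ^ (-r)) 2, ← Real.rpow_mul hs0.le,
        ← Real.rpow_mul hs0.le]
      rw [show (-r * (q + 1) : ℝ) = -r * 2 + (-1) by linear_combination -hrq]
      rw [Real.rpow_add hs0, Real.rpow_neg_one, div_eq_mul_inv]
      norm_num
    have hgq1 : (u + v) ^ (q + 1) = G⁻¹ := by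
      rw [hGdef, show (-q - 1 : ℝ) = -(q + 1) by ring, Real.rpow_neg hg0.le, inv_inv]
    have hSq : (p ^ r + (1 - p) ^ r) ^ (q + 1)
        = G⁻¹ / (u ^ (2:ℕ) / p * (v ^ (2:ℕ) / (1 - p))) := by
      rw [hpr, hsr, show u⁻¹ + v⁻¹ = (u + v) / (u * v) by field_simp; ring,
        Real.div_rpow hg0.le (by positivity), hgq1, Real.mul_rpow hu.le hv.le, huq, hvq]
    simp only [Pi.sub_apply]
    rw [hps, hSq, f1, f2, f3, f4, f5]
    rw [hrdef]
    have hq1' : (q - 1) ≠ 0 := by positivity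
    field_simp
    ring
  -- Assemble
  have hEq : (fun x : ℝ => x * (1 - x) * C / (x ^ r + (1 - x) ^ r) ^ (q - 1))
      =ᶠ[nhds p] ψ := eventually_of_mem hmem L1
  have hD1 : deriv ψ =ᶠ[nhds p] ψ1 :=
    eventually_of_mem hmem fun x hx => (L2 x hx).deriv
  calc deriv (deriv (fun x : ℝ => x * (1 - x) * C / (x ^ r + (1 - x) ^ r) ^ (q - 1))) p
      = deriv (deriv ψ) p := (hEq.deriv).deriv_eq
    _ = deriv ψ1 p := hD1.deriv_eq
    _ = _ := L3.deriv
end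

section
/- Let μ₁ be a probability measure and consider measurable functions ξ_i: 𝒵^i → ℝ, i = 1,…,n+1, each uniformly bounded above by b ∈ ℝ. Let φ(t) = (e^t − 1 − t)/t². Then for any η > 0 and ε ∈ (0,1), with probability at least 1 − ε over the i.i.d. draw of Z₁,…,Z_{n+1}: Σ_{i=1}^{n+1} ξ_i(Z₁,…,Z_i) ≤ Σ_{i=1}^{n+1} E_{Z_i} ξ_i(Z₁,…,Z_i) + η φ(ηb) Σ_{i=1}^{n+1} E_{Z_i} ξ_i²(Z₁,…,Z_i) + log(1/ε)/η, where E_{Z_i} denotes conditional expectation over Z_i given Z₁,…,Z_{i−1}. -/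
open MeasureTheory Real ENNReal



noncomputable def phi (t : ℝ) : ℝ := if t = 0 then 1/2 else (Real.exp t - 1 - t) / t ^ 2

lemma phi_integral (t : ℝ) : phi t = ∫ s in (0:ℝ)..1, (1 - s) * Real.exp (s * t) := by
  rcases eq_or_ne t 0 with h | h
  · subst h
    simp only [phi, if_pos rfl, mul_zero, Real.exp_zero, mul_one]
    rw [intervalIntegral.integral_sub intervalIntegrable_const
      (intervalIntegral.intervalIntegrable_id), intervalIntegral.integral_const,
      integral_id]
    norm_num
  · have key : ∀ s ∈ Set.uIcc (0:ℝ) 1, HasDerivAt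
        (fun s : ℝ => (1 - s) * Real.exp (s * t) / t + Real.exp (s * t) / t ^ 2)
        ((1 - s) * Real.exp (s * t)) s := by
      intro s _
      have he : HasDerivAt (fun s : ℝ => Real.exp (s * t)) (t * Real.exp (s * t)) s := by
        have := (Real.hasDerivAt_exp (s * t)).comp s ((hasDerivAt_id s).mul_const t)
        exact this.congr_deriv (by simp only [id_eq, one_mul]; ring)
      have h1 : HasDerivAt (fun s : ℝ => (1 - s) * Real.exp (s * t) / t)
          (((-1) * Real.exp (s * t) + (1 - s) * (t * Real.exp (s * t))) / t) s := by
        simpa using (((hasDerivAt_const s (1:ℝ)).sub (hasDerivAt_id s)).mul he).div_const t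
      have h2 : HasDerivAt (fun s : ℝ => Real.exp (s * t) / t ^ 2)
          ((t * Real.exp (s * t)) / t ^ 2) s := he.div_const _
      have := h1.add h2
      refine this.congr_deriv ?_
      field_simp
      ring
    rw [intervalIntegral.integral_eq_sub_of_hasDerivAt key]
    · simp only [phi, if_neg h]
      field_simp
      simp only [mul_zero, Real.exp_zero]
      ring
    · apply Continuous.intervalIntegrable
      continuity

lemma phi_mono : Monotone phi := by
  intro t u htu
  rw [phi_integral, phi_integral]
  apply intervalIntegral.integral_mono_on zero_le_one
    (Continuous.intervalIntegrable (by continuity) 0 1)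
    (Continuous.intervalIntegrable (by continuity) 0 1)
  intro s hs
  have h1 : 0 ≤ 1 - s := by linarith [hs.2]
  have h2 : s * t ≤ s * u := mul_le_mul_of_nonneg_left htu hs.1
  exact mul_le_mul_of_nonneg_left (Real.exp_le_exp.2 h2) h1

lemma phi_nonneg (t : ℝ) : 0 ≤ phi t := by
  unfold phi
  split
  · norm_num
  · apply div_nonneg _ (sq_nonneg t)
    nlinarith [Real.add_one_le_exp t]

lemma exp_eq_phi (t : ℝ) : Real.exp t = 1 + t + t ^ 2 * phi t := by
  rcases eq_or_ne t 0 with h | h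
  · simp [h]
  · simp only [phi, if_neg h]
    field_simp
    ring

lemma exp_le_phi {t u : ℝ} (h : t ≤ u) : Real.exp t ≤ 1 + t + t ^ 2 * phi u := by
  rw [exp_eq_phi t]
  have := phi_mono h
  nlinarith [sq_nonneg t]


lemma scalar_bernstein {Z : Type*} [MeasurableSpace Z] (μ : Measure Z) [IsProbabilityMeasure μ]
    (W : Z → ℝ) (hW : Measurable W) (b η : ℝ) (hη : 0 < η) (hb : ∀ v, W v ≤ b)
    (hi : Integrable W μ) (hi2 : Integrable (fun v => W v ^ 2) μ) :
    ∫⁻ v, ENNReal.ofReal (Real.exp (η * (W v - (∫ w, W w ∂μ)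
      - η * phi (η * b) * ∫ w, (W w) ^ 2 ∂μ))) ∂μ ≤ 1 := by
  set m := ∫ w, W w ∂μ with hm
  set s := ∫ w, (W w) ^ 2 ∂μ with hs
  set c := phi (η * b) with hc
  set A := η * m + η * c * (η * s) with hA
  have key : ∀ v, Real.exp (η * W v) ≤ 1 + η * W v + η * c * (η * W v ^ 2) := by
    intro v
    have h1 : η * W v ≤ η * b := mul_le_mul_of_nonneg_left (hb v) hη.le
    have := exp_le_phi h1
    nlinarith [sq_nonneg (W v)]
  set g : Z → ℝ := fun v => 1 + η * W v + η * c * (η * W v ^ 2) with hg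
  have hg_nonneg : ∀ v, 0 ≤ g v := fun v => le_trans (Real.exp_pos _).le (key v)
  have hg_int : Integrable g μ := by
    apply Integrable.add
    · exact (integrable_const (1:ℝ)).add (hi.const_mul η)
    · exact (hi2.const_mul η).const_mul (η * c)
  have hg_integral : ∫ v, g v ∂μ = 1 + A := by
    rw [hg]
    have i1 : Integrable (fun v => 1 + η * W v) μ :=
      (integrable_const (1:ℝ)).add (hi.const_mul η)
    have i2 : Integrable (fun v => η * c * (η * W v ^ 2)) μ :=
      (hi2.const_mul η).const_mul (η * c)
    rw [integral_add i1 i2, integral_add (integrable_const (1:ℝ)) (hi.const_mul η)]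
    simp only [integral_const, measure_univ, ENNReal.toReal_one, probReal_univ, smul_eq_mul, one_mul]
    rw [integral_const_mul, integral_const_mul, integral_const_mul]
    rw [hA, ← hm, ← hs]; ring
  -- split the exponential
  have hsplit : ∀ v, Real.exp (η * (W v - m - η * c * s)) =
      Real.exp (-A) * Real.exp (η * W v) := by
    intro v
    rw [← Real.exp_add]
    congr 1
    rw [hA]; ring
  calc ∫⁻ v, ENNReal.ofReal (Real.exp (η * (W v - m - η * c * s))) ∂μ
      = ∫⁻ v, ENNReal.ofReal (Real.exp (-A)) * ENNReal.ofReal (Real.exp (η * W v)) ∂μ := by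
        congr 1; funext v
        rw [hsplit v, ENNReal.ofReal_mul (Real.exp_pos _).le]
    _ = ENNReal.ofReal (Real.exp (-A)) * ∫⁻ v, ENNReal.ofReal (Real.exp (η * W v)) ∂μ := by
        rw [lintegral_const_mul]
        exact (Real.measurable_exp.comp (hW.const_mul η)).ennreal_ofReal
    _ ≤ ENNReal.ofReal (Real.exp (-A)) * ENNReal.ofReal (Real.exp A) := by
        apply mul_le_mul_right
        calc ∫⁻ v, ENNReal.ofReal (Real.exp (η * W v)) ∂μ
            ≤ ∫⁻ v, ENNReal.ofReal (g v) ∂μ :=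
              lintegral_mono fun v => ENNReal.ofReal_le_ofReal (key v)
          _ = ENNReal.ofReal (∫ v, g v ∂μ) :=
              (ofReal_integral_eq_lintegral_ofReal hg_int
                (Filter.Eventually.of_forall hg_nonneg)).symm
          _ = ENNReal.ofReal (1 + A) := by rw [hg_integral]
          _ ≤ ENNReal.ofReal (Real.exp A) :=
              ENNReal.ofReal_le_ofReal (by linarith [Real.add_one_le_exp A])
    _ = 1 := by
        rw [← ENNReal.ofReal_mul (Real.exp_pos _).le, ← Real.exp_add]
        simp


lemma lintegral_update_pi {Z : Type*} [MeasurableSpace Z] (μ : Measure Z)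
    [IsProbabilityMeasure μ] {n : ℕ} (i : Fin (n + 1))
    (f : (Fin (n + 1) → Z) → ℝ≥0∞) (hf : Measurable f) :
    ∫⁻ z, f z ∂(Measure.pi fun _ : Fin (n + 1) => μ)
      = ∫⁻ z, ∫⁻ v, f (Function.update z i v) ∂μ ∂(Measure.pi fun _ : Fin (n + 1) => μ) := by
  set P := Measure.pi fun _ : Fin (n + 1) => μ with hP
  set Pn := Measure.pi fun _ : Fin n => μ with hPn
  set e := MeasurableEquiv.piFinSuccAbove (fun _ : Fin (n + 1) => Z) i with he
  have mp : MeasurePreserving e P (μ.prod Pn) :=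
    measurePreserving_piFinSuccAbove (fun _ : Fin (n + 1) => μ) i
  have hsymm : ∀ (v : Z) (y : Fin n → Z), e.symm (v, y) = Fin.insertNth i v y := by
    intro v y
    simp [he, MeasurableEquiv.piFinSuccAbove, Fin.insertNthEquiv]
  have hg : Measurable (fun z => ∫⁻ v, f (Function.update z i v) ∂μ) := by
    exact Measurable.lintegral_prod_right'
      (f := fun p : (Fin (n+1) → Z) × Z => f (Function.update p.1 i p.2))
      (hf.comp measurable_update')
  have key : ∀ (F : (Fin (n + 1) → Z) → ℝ≥0∞), Measurable F →
      ∫⁻ z, F z ∂P = ∫⁻ y, ∫⁻ v, F (e.symm (v, y)) ∂μ ∂Pn := by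
    intro F hF
    have hFm : Measurable fun p : Z × (Fin n → Z) => F (e.symm p) :=
      hF.comp e.symm.measurable
    have h1 := mp.lintegral_comp (f := fun p => F (e.symm p)) hFm
    simp only [MeasurableEquiv.symm_apply_apply] at h1
    rw [h1, lintegral_prod_symm (fun p => F (e.symm p)) hFm.aemeasurable]
  rw [key f hf, key _ hg]
  congr 1
  funext y
  have hconst : ∀ v' : Z, ∫⁻ v, f (Function.update (e.symm (v', y)) i v) ∂μ
      = ∫⁻ v, f (e.symm (v, y)) ∂μ := by
    intro v'
    congr 1
    funext v
    rw [hsymm, hsymm, Fin.update_insertNth]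
  rw [show (∫⁻ v', ∫⁻ v, f (Function.update (e.symm (v', y)) i v) ∂μ ∂μ)
      = ∫⁻ v', (∫⁻ v, f (e.symm (v, y)) ∂μ) ∂μ by
    congr 1; funext v'; rw [hconst]]
  simp


lemma martingale_claim {Z : Type*} [MeasurableSpace Z] (μ : Measure Z) [IsProbabilityMeasure μ]
    (n : ℕ) (ξ : Fin (n + 1) → (Fin (n + 1) → Z) → ℝ) (b : ℝ)
    (hmeas : ∀ i, Measurable (ξ i))
    (hbound : ∀ i z, ξ i z ≤ b)
    (hdep : ∀ (i : Fin (n + 1)) (z w : Fin (n + 1) → Z),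
      (∀ j, j ≤ i → z j = w j) → ξ i z = ξ i w)
    (hint : ∀ (i : Fin (n + 1)) (z : Fin (n + 1) → Z),
      Integrable (fun v => ξ i (Function.update z i v)) μ)
    (hint2 : ∀ (i : Fin (n + 1)) (z : Fin (n + 1) → Z),
      Integrable (fun v => (ξ i (Function.update z i v)) ^ 2) μ)
    (η : ℝ) (hη : 0 < η) :
    ∫⁻ z, ENNReal.ofReal (Real.exp (η * ∑ i, (ξ i z
        - (∫ v, ξ i (Function.update z i v) ∂μ)
        - η * phi (η * b) * ∫ v, (ξ i (Function.update z i v)) ^ 2 ∂μ)))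
      ∂(Measure.pi fun _ : Fin (n + 1) => μ) ≤ 1 := by
  set P := Measure.pi fun _ : Fin (n + 1) => μ with hP
  set D : Fin (n + 1) → (Fin (n + 1) → Z) → ℝ := fun i z => ξ i z
      - (∫ v, ξ i (Function.update z i v) ∂μ)
      - η * phi (η * b) * ∫ v, (ξ i (Function.update z i v)) ^ 2 ∂μ with hD
  -- measurability of pieces
  have hm_meas : ∀ i, Measurable fun z : Fin (n + 1) → Z =>
      ∫ v, ξ i (Function.update z i v) ∂μ := by
    intro i
    exact (StronglyMeasurable.integral_prod_right'
      (f := fun p : ((Fin (n + 1) → Z) × Z) => ξ i (Function.update p.1 i p.2))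
      ((hmeas i).comp measurable_update').stronglyMeasurable).measurable
  have hs_meas : ∀ i, Measurable fun z : Fin (n + 1) → Z =>
      ∫ v, (ξ i (Function.update z i v)) ^ 2 ∂μ := by
    intro i
    exact (StronglyMeasurable.integral_prod_right'
      (f := fun p : ((Fin (n + 1) → Z) × Z) => (ξ i (Function.update p.1 i p.2)) ^ 2)
      (((hmeas i).comp measurable_update').pow_const 2).stronglyMeasurable).measurable
  have hD_meas : ∀ i, Measurable (D i) := by
    intro i
    exact ((hmeas i).sub (hm_meas i)).sub ((hs_meas i).const_mul _)
  have hSum_meas : ∀ (s : Finset (Fin (n + 1))),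
      Measurable fun z => ENNReal.ofReal (Real.exp (η * ∑ i ∈ s, D i z)) := by
    intro s
    exact (Real.measurable_exp.comp
      ((Finset.measurable_sum s fun i _ => hD_meas i).const_mul η)).ennreal_ofReal
  -- the induction
  have claim : ∀ k, k ≤ n + 1 →
      ∫⁻ z, ENNReal.ofReal (Real.exp (η * ∑ i ∈ Finset.univ.filter
        (fun i : Fin (n + 1) => (i : ℕ) < k), D i z)) ∂P ≤ 1 := by
    intro k
    induction k with
    | zero =>
      intro _
      have : Finset.univ.filter (fun i : Fin (n + 1) => (i : ℕ) < 0) = ∅ := by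
        apply Finset.filter_false_of_mem; intro i _; omega
      simp [this]
    | succ k ih =>
      intro hk1
      have hkn : k < n + 1 := by omega
      set κ : Fin (n + 1) := ⟨k, hkn⟩ with hκ
      have hfilter : Finset.univ.filter (fun i : Fin (n + 1) => (i : ℕ) < k + 1)
          = insert κ (Finset.univ.filter (fun i : Fin (n + 1) => (i : ℕ) < k)) := by
        ext i
        simp only [Finset.mem_filter, Finset.mem_univ, true_and, Finset.mem_insert]
        constructor
        · intro h
          rcases Nat.lt_succ_iff_lt_or_eq.1 h with h | h
          · exact Or.inr h
          · exact Or.inl (Fin.ext h)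
        · rintro (h | h)
          · rw [h]; simp [hκ]
          · omega
      have hκnot : κ ∉ Finset.univ.filter (fun i : Fin (n + 1) => (i : ℕ) < k) := by
        simp [hκ]
      -- D i is unchanged by updating coordinate κ, for i < k
      have hDconst : ∀ (i : Fin (n + 1)), (i : ℕ) < k → ∀ (z : Fin (n + 1) → Z) (v : Z),
          D i (Function.update z κ v) = D i z := by
        intro i hik z v
        have hne : ∀ j : Fin (n + 1), j ≤ i → j ≠ κ := by
          intro j hj
          have : (j : ℕ) ≤ (i : ℕ) := hj
          intro hcon
          rw [hcon] at this
          simp only [hκ] at this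
          omega
        have h1 : ξ i (Function.update z κ v) = ξ i z := by
          apply hdep
          intro j hj
          exact Function.update_of_ne (hne j hj) v z
        have h2 : ∀ w : Z, ξ i (Function.update (Function.update z κ v) i w)
            = ξ i (Function.update z i w) := by
          intro w
          apply hdep
          intro j hj
          rcases eq_or_ne j i with rfl | hji
          · simp
          · rw [Function.update_of_ne hji, Function.update_of_ne hji,
              Function.update_of_ne (hne j hj)]
        have h3 : (∫ w, ξ i (Function.update (Function.update z κ v) i w) ∂μ)
            = ∫ w, ξ i (Function.update z i w) ∂μ := by
          congr 1; funext w; exact h2 w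
        have h4 : (∫ w, (ξ i (Function.update (Function.update z κ v) i w)) ^ 2 ∂μ)
            = ∫ w, (ξ i (Function.update z i w)) ^ 2 ∂μ := by
          congr 1; funext w; rw [h2 w]
        simp only [hD]
        rw [h1, h3, h4]
      -- conditional expectation bound at coordinate κ
      have hscalar : ∀ z : Fin (n + 1) → Z,
          ∫⁻ v, ENNReal.ofReal (Real.exp (η * D κ (Function.update z κ v))) ∂μ ≤ 1 := by
        intro z
        have hcollapse : ∀ (v w : Z),
            Function.update (Function.update z κ v) κ w = Function.update z κ w := by
          intro v w; rw [Function.update_idem]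
        have heq : ∀ v, D κ (Function.update z κ v)
            = (fun v => ξ κ (Function.update z κ v)) v
              - (∫ w, ξ κ (Function.update z κ w) ∂μ)
              - η * phi (η * b) * ∫ w, (ξ κ (Function.update z κ w)) ^ 2 ∂μ := by
          intro v
          simp only [hD, hcollapse]
        calc ∫⁻ v, ENNReal.ofReal (Real.exp (η * D κ (Function.update z κ v))) ∂μ
            = ∫⁻ v, ENNReal.ofReal (Real.exp (η * ((fun v => ξ κ (Function.update z κ v)) v
              - (∫ w, (fun v => ξ κ (Function.update z κ v)) w ∂μ)
              - η * phi (η * b) * ∫ w, ((fun v => ξ κ (Function.update z κ v)) w) ^ 2 ∂μ))) ∂μ := by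
              congr 1; funext v; rw [heq v]
          _ ≤ 1 := scalar_bernstein μ _ ((hmeas κ).comp (measurable_update z)) b η hη
              (fun v => hbound κ _) (hint κ z) (hint2 κ z)
      -- main computation
      calc ∫⁻ z, ENNReal.ofReal (Real.exp (η * ∑ i ∈ Finset.univ.filter
            (fun i : Fin (n + 1) => (i : ℕ) < k + 1), D i z)) ∂P
          = ∫⁻ z, ∫⁻ v, ENNReal.ofReal (Real.exp (η * ∑ i ∈ Finset.univ.filter
            (fun i : Fin (n + 1) => (i : ℕ) < k + 1), D i (Function.update z κ v))) ∂μ ∂P :=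
            lintegral_update_pi μ κ _ (hSum_meas _)
        _ ≤ ∫⁻ z, ENNReal.ofReal (Real.exp (η * ∑ i ∈ Finset.univ.filter
            (fun i : Fin (n + 1) => (i : ℕ) < k), D i z)) ∂P := by
            apply lintegral_mono
            intro z
            have hsum_eq : ∀ v, ∑ i ∈ Finset.univ.filter
                (fun i : Fin (n + 1) => (i : ℕ) < k + 1), D i (Function.update z κ v)
                = D κ (Function.update z κ v) + ∑ i ∈ Finset.univ.filter
                  (fun i : Fin (n + 1) => (i : ℕ) < k), D i z := by
              intro v
              rw [hfilter, Finset.sum_insert hκnot]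
              congr 1
              apply Finset.sum_congr rfl
              intro i hi
              simp only [Finset.mem_filter] at hi
              exact hDconst i hi.2 z v
            calc ∫⁻ v, ENNReal.ofReal (Real.exp (η * ∑ i ∈ Finset.univ.filter
                  (fun i : Fin (n + 1) => (i : ℕ) < k + 1), D i (Function.update z κ v))) ∂μ
                = ∫⁻ v, ENNReal.ofReal (Real.exp (η * ∑ i ∈ Finset.univ.filter
                    (fun i : Fin (n + 1) => (i : ℕ) < k), D i z))
                  * ENNReal.ofReal (Real.exp (η * D κ (Function.update z κ v))) ∂μ := by
                  congr 1; funext v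
                  rw [hsum_eq v, show η * (D κ (Function.update z κ v)
                      + ∑ i ∈ Finset.univ.filter (fun i : Fin (n + 1) => (i : ℕ) < k), D i z)
                    = η * (∑ i ∈ Finset.univ.filter (fun i : Fin (n + 1) => (i : ℕ) < k), D i z)
                      + η * D κ (Function.update z κ v) from by ring,
                    Real.exp_add, ENNReal.ofReal_mul (Real.exp_pos _).le]
              _ = ENNReal.ofReal (Real.exp (η * ∑ i ∈ Finset.univ.filter
                    (fun i : Fin (n + 1) => (i : ℕ) < k), D i z))
                  * ∫⁻ v, ENNReal.ofReal (Real.exp (η * D κ (Function.update z κ v))) ∂μ := by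
                  apply lintegral_const_mul
                  exact (Real.measurable_exp.comp
                    (((hD_meas κ).comp (measurable_update z)).const_mul η)).ennreal_ofReal
              _ ≤ ENNReal.ofReal (Real.exp (η * ∑ i ∈ Finset.univ.filter
                    (fun i : Fin (n + 1) => (i : ℕ) < k), D i z)) * 1 :=
                  mul_le_mul_right (hscalar z) _
              _ = ENNReal.ofReal (Real.exp (η * ∑ i ∈ Finset.univ.filter
                    (fun i : Fin (n + 1) => (i : ℕ) < k), D i z)) := mul_one _
        _ ≤ 1 := ih (by omega)
  have hfull : Finset.univ.filter (fun i : Fin (n + 1) => (i : ℕ) < n + 1)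
      = (Finset.univ : Finset (Fin (n + 1))) := by
    apply Finset.filter_true_of_mem
    intro i _
    exact i.isLt
  have := claim (n + 1) le_rfl
  rw [hfull] at this
  exact this


/-- Martingale Bernstein-type deviation bound: with probability at least `1 − ε` over the
i.i.d. draw of `Z₀,…,Z_n`,
`Σᵢ ξᵢ(Z₀,…,Zᵢ) ≤ Σᵢ E_{Zᵢ} ξᵢ + η φ(ηb) Σᵢ E_{Zᵢ} ξᵢ² + log(1/ε)/η`. -/
theorem stmt16 {Z : Type*} [MeasurableSpace Z] (μ : Measure Z) [IsProbabilityMeasure μ]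
    (n : ℕ) (ξ : Fin (n + 1) → (Fin (n + 1) → Z) → ℝ) (b : ℝ)
    (hmeas : ∀ i, Measurable (ξ i))
    (hbound : ∀ i z, ξ i z ≤ b)
    (hdep : ∀ (i : Fin (n + 1)) (z w : Fin (n + 1) → Z),
      (∀ j, j ≤ i → z j = w j) → ξ i z = ξ i w)
    (hint : ∀ (i : Fin (n + 1)) (z : Fin (n + 1) → Z),
      Integrable (fun v => ξ i (Function.update z i v)) μ)
    (hint2 : ∀ (i : Fin (n + 1)) (z : Fin (n + 1) → Z),
      Integrable (fun v => (ξ i (Function.update z i v)) ^ 2) μ)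
    (η ε : ℝ) (hη : 0 < η) (hε : ε ∈ Set.Ioo (0:ℝ) 1) :
    ENNReal.ofReal (1 - ε) ≤
      Measure.pi (fun _ : Fin (n + 1) => μ)
        { z | ∑ i, ξ i z
            ≤ (∑ i, ∫ v, ξ i (Function.update z i v) ∂μ)
              + η * (if η * b = 0 then (1/2 : ℝ)
                  else (Real.exp (η * b) - 1 - η * b) / (η * b) ^ 2)
                * ∑ i, ∫ v, (ξ i (Function.update z i v)) ^ 2 ∂μ
              + Real.log (1 / ε) / η } := by
  obtain ⟨hε0, hε1⟩ := hε
  set P := Measure.pi fun _ : Fin (n + 1) => μ with hP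
  have hphi : (if η * b = 0 then (1/2 : ℝ)
      else (Real.exp (η * b) - 1 - η * b) / (η * b) ^ 2) = phi (η * b) := rfl
  rw [hphi]
  set A := { z : Fin (n + 1) → Z | ∑ i, ξ i z
      ≤ (∑ i, ∫ v, ξ i (Function.update z i v) ∂μ)
        + η * phi (η * b) * ∑ i, ∫ v, (ξ i (Function.update z i v)) ^ 2 ∂μ
        + Real.log (1 / ε) / η } with hA
  set f : (Fin (n + 1) → Z) → ℝ≥0∞ := fun z => ENNReal.ofReal (Real.exp (η * ∑ i, (ξ i z
      - (∫ v, ξ i (Function.update z i v) ∂μ)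
      - η * phi (η * b) * ∫ v, (ξ i (Function.update z i v)) ^ 2 ∂μ))) with hf
  have hlint : ∫⁻ z, f z ∂P ≤ 1 :=
    martingale_claim μ n ξ b hmeas hbound hdep hint hint2 η hη
  -- on the complement, f is large
  have hcompl : Aᶜ ⊆ { z | ENNReal.ofReal (1 / ε) ≤ f z } := by
    intro z hz
    simp only [hA, Set.mem_compl_iff, Set.mem_setOf_eq, not_le] at hz
    have hsum : ∑ i, (ξ i z - (∫ v, ξ i (Function.update z i v) ∂μ)
        - η * phi (η * b) * ∫ v, (ξ i (Function.update z i v)) ^ 2 ∂μ)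
        = ∑ i, ξ i z - (∑ i, ∫ v, ξ i (Function.update z i v) ∂μ)
          - η * phi (η * b) * ∑ i, ∫ v, (ξ i (Function.update z i v)) ^ 2 ∂μ := by
      rw [Finset.sum_sub_distrib, Finset.sum_sub_distrib, Finset.mul_sum]
    have h1 : Real.log (1 / ε) / η < ∑ i, (ξ i z - (∫ v, ξ i (Function.update z i v) ∂μ)
        - η * phi (η * b) * ∫ v, (ξ i (Function.update z i v)) ^ 2 ∂μ) := by
      rw [hsum]; linarith
    have h2 : Real.log (1 / ε) ≤ η * ∑ i, (ξ i z - (∫ v, ξ i (Function.update z i v) ∂μ)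
        - η * phi (η * b) * ∫ v, (ξ i (Function.update z i v)) ^ 2 ∂μ) := by
      rw [div_lt_iff₀ hη] at h1
      nlinarith
    have h3 : (1 / ε : ℝ) ≤ Real.exp (η * ∑ i, (ξ i z
        - (∫ v, ξ i (Function.update z i v) ∂μ)
        - η * phi (η * b) * ∫ v, (ξ i (Function.update z i v)) ^ 2 ∂μ)) := by
      calc (1 / ε : ℝ) = Real.exp (Real.log (1 / ε)) :=
            (Real.exp_log (by positivity)).symm
        _ ≤ _ := Real.exp_le_exp.2 h2
    exact ENNReal.ofReal_le_ofReal h3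
  -- Markov
  have hm_meas : ∀ i : Fin (n + 1), Measurable fun z : Fin (n + 1) → Z =>
      ∫ v, ξ i (Function.update z i v) ∂μ := fun i =>
    (StronglyMeasurable.integral_prod_right'
      (f := fun p : ((Fin (n + 1) → Z) × Z) => ξ i (Function.update p.1 i p.2))
      ((hmeas i).comp measurable_update').stronglyMeasurable).measurable
  have hs_meas : ∀ i : Fin (n + 1), Measurable fun z : Fin (n + 1) → Z =>
      ∫ v, (ξ i (Function.update z i v)) ^ 2 ∂μ := fun i =>
    (StronglyMeasurable.integral_prod_right'
      (f := fun p : ((Fin (n + 1) → Z) × Z) => (ξ i (Function.update p.1 i p.2)) ^ 2)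
      (((hmeas i).comp measurable_update').pow_const 2).stronglyMeasurable).measurable
  have hf_meas : AEMeasurable f P := by
    apply Measurable.aemeasurable
    exact (Real.measurable_exp.comp
      ((Finset.measurable_sum Finset.univ fun i _ =>
        ((hmeas i).sub (hm_meas i)).sub ((hs_meas i).const_mul _)).const_mul η)).ennreal_ofReal
  have hmarkov : ENNReal.ofReal (1 / ε) * P { z | ENNReal.ofReal (1 / ε) ≤ f z } ≤ 1 :=
    le_trans (mul_meas_ge_le_lintegral₀ hf_meas _) hlint
  have hne0 : ENNReal.ofReal (1 / ε) ≠ 0 := by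
    simp [ENNReal.ofReal_eq_zero, not_le]
    positivity
  have hinv : (ENNReal.ofReal (1 / ε))⁻¹ = ENNReal.ofReal ε := by
    rw [one_div, ENNReal.ofReal_inv_of_pos hε0, inv_inv]
  have hAc : P Aᶜ ≤ ENNReal.ofReal ε := by
    have h1 : P Aᶜ ≤ P { z | ENNReal.ofReal (1 / ε) ≤ f z } := measure_mono hcompl
    have h2 : P { z | ENNReal.ofReal (1 / ε) ≤ f z } ≤ (ENNReal.ofReal (1 / ε))⁻¹ := by
      rw [ENNReal.le_inv_iff_mul_le, mul_comm]
      exact hmarkov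
    rw [← hinv]
    exact le_trans h1 h2
  have hunion : (1 : ℝ≥0∞) ≤ P A + P Aᶜ := by
    rw [show (1 : ℝ≥0∞) = P Set.univ from (measure_univ (μ := P)).symm,
      ← Set.union_compl_self A]
    exact measure_union_le _ _
  have : ENNReal.ofReal (1 - ε) = 1 - ENNReal.ofReal ε := by
    rw [ENNReal.ofReal_sub _ hε0.le, ENNReal.ofReal_one]
  rw [this, tsub_le_iff_right]
  calc (1 : ℝ≥0∞) ≤ P A + P Aᶜ := hunion
    _ ≤ P A + ENNReal.ofReal ε := add_le_add_right hAc _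
end

section
/- For any real b, any η > 0, and any random variable W with W ≤ b almost surely and finite second moment, E exp(η(W − EW − η φ(ηb) E[W²])) ≤ 1, where φ(t) = (e^t − 1 − t)/t² (with φ(0) = 1/2). -/
open MeasureTheory

open intervalIntegral

noncomputable def phiI (x : ℝ) : ℝ := ∫ s in (0:ℝ)..1, (1 - s) * Real.exp (s * x)

lemma phiI_eq (x : ℝ) :
    phiI x = if x = 0 then (1/2 : ℝ) else (Real.exp x - 1 - x) / x ^ 2 := by
  unfold phiI
  by_cases hx : x = 0
  · simp [hx, Real.exp_zero, mul_one]
    have : ∫ s in (0:ℝ)..1, (1 - s) = 1/2 := by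
      simp [intervalIntegral.integral_sub intervalIntegrable_const intervalIntegrable_id,
        integral_id]
      norm_num
    simpa using this
  · rw [if_neg hx]
    have key : ∀ s ∈ Set.uIcc (0:ℝ) 1,
        HasDerivAt (fun s => Real.exp (s * x) * ((1 - s) / x + 1 / x ^ 2))
          ((1 - s) * Real.exp (s * x)) s := by
      intro s _
      have h1 : HasDerivAt (fun s : ℝ => Real.exp (s * x)) (Real.exp (s * x) * x) s := by
        simpa using ((hasDerivAt_id s).mul_const x).exp
      have h2 : HasDerivAt (fun s : ℝ => (1 - s) / x + 1 / x ^ 2) (-1 / x) s := by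
        have : HasDerivAt (fun s : ℝ => (1 - s)) (-1) s := by
          simpa using (hasDerivAt_id s).const_sub (1:ℝ)
        exact (this.div_const x).add_const (1 / x ^ 2)
      have : HasDerivAt (fun s => Real.exp (s * x) * ((1 - s) / x + 1 / x ^ 2)) _ s := h1.mul h2
      convert this using 1
      field_simp
      ring
    have hcont : IntervalIntegrable (fun s => (1 - s) * Real.exp (s * x)) volume 0 1 :=
      (Continuous.intervalIntegrable (by continuity) 0 1)
    rw [intervalIntegral.integral_eq_sub_of_hasDerivAt key hcont]
    field_simp
    simp only [mul_zero, Real.exp_zero]; ring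

lemma phiI_mono {x t : ℝ} (h : x ≤ t) : phiI x ≤ phiI t := by
  unfold phiI
  apply intervalIntegral.integral_mono_on (by norm_num)
    (Continuous.intervalIntegrable (by continuity) 0 1)
    (Continuous.intervalIntegrable (by continuity) 0 1)
  intro s hs
  have h0 : 0 ≤ s := hs.1
  have h1 : s ≤ 1 := hs.2
  have : Real.exp (s * x) ≤ Real.exp (s * t) :=
    Real.exp_le_exp.2 (mul_le_mul_of_nonneg_left h h0)
  nlinarith [Real.exp_pos (s * x)]

lemma exp_le_quad {x t : ℝ} (h : x ≤ t) :
    Real.exp x ≤ 1 + x + x ^ 2 *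
      (if t = 0 then (1/2 : ℝ) else (Real.exp t - 1 - t) / t ^ 2) := by
  rw [← phiI_eq]
  have hx : Real.exp x = 1 + x + x ^ 2 * phiI x := by
    rw [phiI_eq]
    by_cases hx0 : x = 0
    · simp [hx0]
    · rw [if_neg hx0]; field_simp; ring
  rw [hx]
  have := phiI_mono h
  nlinarith [sq_nonneg x]

/-- Bernstein-type exponential moment inequality: for `W ≤ b` a.s. with finite second moment,
`E exp(η(W − EW − η φ(ηb) E W²)) ≤ 1` where `φ(t) = (eᵗ − 1 − t)/t²`, `φ(0) = 1/2`. -/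
theorem stmt17 {Ω : Type*} [MeasurableSpace Ω] (μ : Measure Ω) [IsProbabilityMeasure μ]
    (W : Ω → ℝ) (b η : ℝ) (hη : 0 < η) (hb : ∀ᵐ x ∂μ, W x ≤ b)
    (hW : Integrable W μ) (hW2 : Integrable (fun x => (W x) ^ 2) μ) :
    (∫ x, Real.exp (η * (W x - (∫ y, W y ∂μ)
        - η * (if η * b = 0 then (1/2 : ℝ)
            else (Real.exp (η * b) - 1 - η * b) / (η * b) ^ 2) * ∫ y, (W y) ^ 2 ∂μ)) ∂μ)
      ≤ 1 := by
  set K : ℝ := if η * b = 0 then (1/2 : ℝ)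
      else (Real.exp (η * b) - 1 - η * b) / (η * b) ^ 2 with hK
  set m : ℝ := ∫ y, W y ∂μ
  set v : ℝ := ∫ y, (W y) ^ 2 ∂μ
  -- pointwise bound
  have hpt : ∀ᵐ x ∂μ, Real.exp (η * W x) ≤ 1 + η * W x + (η ^ 2 * K) * (W x) ^ 2 := by
    filter_upwards [hb] with x hx
    have hle : η * W x ≤ η * b := mul_le_mul_of_nonneg_left hx hη.le
    have := exp_le_quad hle
    calc Real.exp (η * W x) ≤ 1 + η * W x + (η * W x) ^ 2 * K := this
      _ = 1 + η * W x + (η ^ 2 * K) * (W x) ^ 2 := by ring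
  -- integrability of the dominating function
  have hg : Integrable (fun x => 1 + η * W x + (η ^ 2 * K) * (W x) ^ 2) μ :=
    ((integrable_const (1:ℝ)).add (hW.const_mul η)).add (hW2.const_mul (η ^ 2 * K))
  -- integrability of exp (η W)
  have hexp : Integrable (fun x => Real.exp (η * W x)) μ := by
    apply hg.mono' (Real.continuous_exp.comp_aestronglyMeasurable
      (hW.aestronglyMeasurable.const_mul η))
    filter_upwards [hpt] with x hx
    rw [Real.norm_eq_abs, abs_of_pos (Real.exp_pos _)]
    exact hx
  -- integral bound
  have hbound : ∫ x, Real.exp (η * W x) ∂μ ≤ 1 + η * m + η ^ 2 * K * v := by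
    have h1 : ∫ x, Real.exp (η * W x) ∂μ
        ≤ ∫ x, (1 + η * W x + (η ^ 2 * K) * (W x) ^ 2) ∂μ :=
      integral_mono_ae hexp hg hpt
    have h2 : ∫ x, (1 + η * W x + (η ^ 2 * K) * (W x) ^ 2) ∂μ
        = 1 + η * m + η ^ 2 * K * v := by
      have hA : Integrable (fun x => 1 + η * W x) μ :=
        (integrable_const (1:ℝ)).add (hW.const_mul η)
      have hB : Integrable (fun x => (η ^ 2 * K) * (W x) ^ 2) μ :=
        hW2.const_mul (η ^ 2 * K)
      have hC : Integrable (fun x => (1:ℝ)) μ := integrable_const 1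
      have hD : Integrable (fun x => η * W x) μ := hW.const_mul η
      rw [integral_add hA hB, integral_add hC hD,
        MeasureTheory.integral_const, MeasureTheory.integral_const_mul, MeasureTheory.integral_const_mul]
      simp [m, v]
    linarith
  have hbound2 : ∫ x, Real.exp (η * W x) ∂μ ≤ Real.exp (η * m + η ^ 2 * K * v) := by
    calc ∫ x, Real.exp (η * W x) ∂μ ≤ 1 + η * m + η ^ 2 * K * v := hbound
      _ = (η * m + η ^ 2 * K * v) + 1 := by ring
      _ ≤ Real.exp (η * m + η ^ 2 * K * v) := Real.add_one_le_exp _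
  -- final computation
  have hrw : ∀ x, Real.exp (η * (W x - m - η * K * v))
      = Real.exp (η * W x) / Real.exp (η * m + η ^ 2 * K * v) := by
    intro x
    rw [← Real.exp_sub]
    ring_nf
  calc (∫ x, Real.exp (η * (W x - m - η * K * v)) ∂μ)
      = (∫ x, Real.exp (η * W x) ∂μ) / Real.exp (η * m + η ^ 2 * K * v) := by
        simp only [hrw]; exact integral_div _ _
    _ ≤ 1 := by
        rw [div_le_one (Real.exp_pos _)]
        simpa using hbound2
end
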